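/- Assume deg q ≥ 2 and reverse(q) = q. Let M be an R-module that is finite-dimensional as a K-vector space, let f : M × M → R be additive in each variable and satisfy f(ρ·x, y) = ρ·f(x, y), f(x, y) = σ(f(y, x)), and nondegeneracy (f(x, y) = 0 for all y implies x = 0). Let π denote the class of q in R and, for 0 ≤ i ≤ m, let M_i = {x ∈ M : π^i·x = 0}. Then for x ∈ M one has f(y, x) = 0 for all y ∈ M_i if and only if x ∈ π^i·M. -/

import Mathlib

open Polynomial

/-- The "top coefficient" functional on `K[X] ⧸ (p)`: coefficient of `X^(deg p - 1)`
of the canonical representative. -/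
noncomputable def auxT {K : Type*} [Field K] {p : K[X]} (hp : p.Monic) :
    (K[X] ⧸ Ideal.span {p}) →ₗ[K] K :=
  (Polynomial.lcoeff K (p.natDegree - 1)).comp (AdjoinRoot.modByMonicHom hp)

/-- The pairing `(r, a) ↦ auxT (r * a)` is nondegenerate. -/
theorem auxT_nd {K : Type*} [Field K] {p : K[X]} (hp : p.Monic) (hd : 1 ≤ p.natDegree)
    (a : K[X] ⧸ Ideal.span {p}) (h : ∀ r, auxT hp (r * a) = 0) : a = 0 := by
  by_contra ha
  obtain ⟨f0, rfl⟩ := AdjoinRoot.mk_surjective a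
  have hmk : AdjoinRoot.mk p (f0 %ₘ p) = AdjoinRoot.mk p f0 := by
    have := AdjoinRoot.mk_leftInverse hp (AdjoinRoot.mk p f0)
    rwa [AdjoinRoot.modByMonicHom_mk] at this
  have hg0 : f0 %ₘ p ≠ 0 := by
    intro h0
    exact ha (by rw [← hmk, h0, map_zero]; rfl)
  have hdeg : (f0 %ₘ p).degree < p.degree := degree_modByMonic_lt f0 hp
  set d := (f0 %ₘ p).natDegree with hdd
  have hdn : d < p.natDegree := natDegree_lt_natDegree hg0 hdeg
  set k := p.natDegree - 1 - d with hk
  have hdk : d + k = p.natDegree - 1 := by omega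
  have key := h (AdjoinRoot.mk p (X ^ k))
  erw [← hmk, ← map_mul (AdjoinRoot.mk p) (X ^ k) (f0 %ₘ p)] at key
  have hdeg2 : (X ^ k * (f0 %ₘ p)).degree < p.degree := by
    apply Polynomial.degree_lt_degree
    rw [natDegree_mul (pow_ne_zero k X_ne_zero) hg0, natDegree_X_pow]
    omega
  have hcalc : auxT hp (AdjoinRoot.mk p (X ^ k * (f0 %ₘ p)))
      = (f0 %ₘ p).leadingCoeff := by
    unfold auxT
    erw [LinearMap.comp_apply]
    erw [AdjoinRoot.modByMonicHom_mk hp]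
    rw [(modByMonic_eq_self_iff hp).mpr hdeg2, lcoeff_apply, ← hdk, coeff_X_pow_mul]
    rfl
  rw [hcalc] at key
  exact hg0 (leadingCoeff_eq_zero.mp key)

set_option maxHeartbeats 2000000 in
/-- Assume `deg q ≥ 2` and `reverse q = q`. For a nondegenerate symmetric Hermitian form `f`
on an `R`-module `M` (`R = K[X]/(q^m)`), finite-dimensional over `K`, and `π` the class of `q`
in `R`, an element `x ∈ M` satisfies `f y x = 0` for all `y` with `π^i • y = 0` iff
`x ∈ π^i • M` (`0 ≤ i ≤ m`). -/
theorem stmt_16 {K : Type*} [Field K] (hchar : (2 : K) ≠ 0)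
    (q : K[X]) (hq : q.Monic) (hirr : Irreducible q)
    (hdeg : 2 ≤ q.natDegree) (hrev : q.reverse = q) (m : ℕ) (hm : 1 ≤ m)
    (σ : (K[X] ⧸ Ideal.span {q ^ m}) ≃ₐ[K] (K[X] ⧸ Ideal.span {q ^ m}))
    (hσ : σ (Ideal.Quotient.mk (Ideal.span {q ^ m}) X)
        * Ideal.Quotient.mk (Ideal.span {q ^ m}) X = 1)
    {M : Type*} [AddCommGroup M] [Module (K[X] ⧸ Ideal.span {q ^ m}) M]
    [Module K M] [IsScalarTower K (K[X] ⧸ Ideal.span {q ^ m}) M]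
    [FiniteDimensional K M]
    (f : M → M → (K[X] ⧸ Ideal.span {q ^ m}))
    (hf_add₁ : ∀ x₁ x₂ y, f (x₁ + x₂) y = f x₁ y + f x₂ y)
    (hf_add₂ : ∀ x y₁ y₂, f x (y₁ + y₂) = f x y₁ + f x y₂)
    (hf_lin : ∀ (ρ : K[X] ⧸ Ideal.span {q ^ m}) (x y : M), f (ρ • x) y = ρ * f x y)
    (hf_herm : ∀ x y, f x y = σ (f y x))
    (hf_nd : ∀ x, (∀ y, f x y = 0) → x = 0)
    (i : ℕ) (hi : i ≤ m) :
    ∀ x : M,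
      (∀ y : M, (Ideal.Quotient.mk (Ideal.span {q ^ m}) q) ^ i • y = 0 → f y x = 0) ↔
      (∃ z : M, x = (Ideal.Quotient.mk (Ideal.span {q ^ m}) q) ^ i • z) := by
  classical
  intro x
  have hqm : (q ^ m).Monic := hq.pow m
  set π : K[X] ⧸ Ideal.span {q ^ m} := Ideal.Quotient.mk (Ideal.span {q ^ m}) q with hπ
  set ξ : K[X] ⧸ Ideal.span {q ^ m} := Ideal.Quotient.mk (Ideal.span {q ^ m}) X with hξ
  have hn : 1 ≤ (q ^ m).natDegree := by
    rw [Polynomial.natDegree_pow]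
    have := Nat.mul_le_mul hm hdeg
    omega
  have hu : σ ξ * ξ = 1 := hσ
  letI : Invertible ξ := ⟨σ ξ, hu, by rw [mul_comm]; exact hu⟩
  have hinv : ⅟ ξ = σ ξ := rfl
  -- π = aeval ξ q
  have hπeval : aeval ξ q = π := by
    have := Polynomial.aeval_algHom_apply (Ideal.Quotient.mkₐ K (Ideal.span {q ^ m})) X q
    simpa [Polynomial.aeval_X_left_apply, Ideal.Quotient.mkₐ_eq_mk] using this
  -- σ π = π * (σ ξ)^h
  have hσπ : σ π = π * (σ ξ) ^ q.natDegree := by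
    have h1 : σ π = aeval (σ ξ) q := by
      rw [← hπeval]
      exact (Polynomial.aeval_algHom_apply σ.toAlgHom ξ q).symm
    have h2 := Polynomial.eval₂_reverse_mul_pow
      (algebraMap K (K[X] ⧸ Ideal.span {q ^ m})) ξ q
    rw [hrev] at h2
    have h3 : aeval (σ ξ) q * ξ ^ q.natDegree = aeval ξ q := by
      simpa [Polynomial.aeval_def, hinv] using h2
    have h4 : σ π * ξ ^ q.natDegree = π := by rw [h1, hπeval] at *; exact h3
    calc σ π = σ π * (ξ * σ ξ) ^ q.natDegree := by
          rw [mul_comm ξ, hu, one_pow, mul_one]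
      _ = (σ π * ξ ^ q.natDegree) * (σ ξ) ^ q.natDegree := by ring
      _ = π * (σ ξ) ^ q.natDegree := by rw [h4]
  -- basic properties of f
  have hf0₁ : ∀ z, f 0 z = 0 := by
    intro z
    have h := hf_add₁ 0 0 z
    rw [add_zero] at h
    exact (left_eq_add.mp h)
  have hf_lin₂ : ∀ (ρ : K[X] ⧸ Ideal.span {q ^ m}) (y x' : M),
      f y (ρ • x') = σ ρ * f y x' := by
    intro ρ y x'
    rw [hf_herm, hf_lin, map_mul, ← hf_herm]
  -- easy direction
  have hC : ∀ (z y : M), π ^ i • y = 0 → f y (π ^ i • z) = 0 := by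
    intro z y hy
    rw [hf_lin₂, map_pow, hσπ]
    have e1 : (π * σ ξ ^ q.natDegree) ^ i * f y z
        = (σ ξ ^ q.natDegree) ^ i * (π ^ i * f y z) := by ring
    rw [e1, ← hf_lin, hy, hf0₁, mul_zero]
  -- trace functional
  set T : (K[X] ⧸ Ideal.span {q ^ m}) →ₗ[K] K := auxT hqm with hTdef
  have hnd : ∀ a : K[X] ⧸ Ideal.span {q ^ m}, (∀ r, T (r * a) = 0) → a = 0 :=
    fun a h => auxT_nd hqm hn a h
  have hsmulK : ∀ (c : K) (x' : M),
      c • x' = (algebraMap K (K[X] ⧸ Ideal.span {q ^ m}) c) • x' :=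
    fun c x' => (algebraMap_smul _ c x').symm
  -- the K-bilinear form B
  have hBadd₁ : ∀ (y₁ y₂ x' : M), T (f (y₁ + y₂) x') = T (f y₁ x') + T (f y₂ x') := by
    intro y₁ y₂ x'
    rw [hf_add₁, map_add]
  have hBsmul₁ : ∀ (c : K) (y x' : M), T (f (c • y) x') = c • T (f y x') := by
    intro c y x'
    rw [hsmulK, hf_lin, ← Algebra.smul_def, map_smul]
  have hBadd₂ : ∀ (y x₁ x₂ : M), T (f y (x₁ + x₂)) = T (f y x₁) + T (f y x₂) := by
    intro y x₁ x₂
    rw [hf_add₂, map_add]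
  have hBsmul₂ : ∀ (c : K) (y x' : M), T (f y (c • x')) = c • T (f y x') := by
    intro c y x'
    rw [hsmulK, hf_lin₂, AlgEquiv.commutes, ← Algebra.smul_def, map_smul]
  set B : M →ₗ[K] M →ₗ[K] K := LinearMap.mk₂ K (fun y x' => T (f y x'))
    hBadd₁ hBsmul₁ hBadd₂ hBsmul₂ with hB
  -- Ψ := B.flip is injective, hence surjective
  have hker : ∀ x' : M, B.flip x' = 0 → x' = 0 := by
    intro x' hx'
    apply hf_nd
    intro y
    have hy : f y x' = 0 := by
      apply hnd
      intro r
      have h0 : B.flip x' (r • y) = 0 := by rw [hx']; rfl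
      rw [LinearMap.flip_apply, hB, LinearMap.mk₂_apply, hf_lin] at h0
      exact h0
    rw [hf_herm, hy, map_zero]
  have hΨinj : Function.Injective B.flip :=
    LinearMap.ker_eq_bot.mp (LinearMap.ker_eq_bot'.mpr hker)
  have hfr : Module.finrank K M = Module.finrank K (Module.Dual K M) :=
    Subspace.dual_finrank_eq.symm
  have hΨsurj : Function.Surjective B.flip :=
    (LinearMap.injective_iff_surjective_of_finrank_eq_finrank hfr).mp hΨinj
  -- the K-linear map L = π^i • ·
  have hcomm : ∀ (c : K) (x' : M), π ^ i • (c • x') = c • (π ^ i • x') := by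
    intro c x'
    rw [hsmulK c x', smul_smul, mul_comm, ← smul_smul, ← hsmulK]
  set L : M →ₗ[K] M :=
    { toFun := fun x' => π ^ i • x',
      map_add' := fun a b => smul_add _ a b,
      map_smul' := fun c a => by simpa using hcomm c a } with hL
  set W := LinearMap.ker L with hW
  set Φ : M →ₗ[K] Module.Dual K W := (W.subtype.dualMap).comp B.flip with hΦ
  have hΦsurj : Function.Surjective Φ :=
    (LinearMap.dualMap_surjective_of_injective W.injective_subtype).comp hΨsurj
  have h1 : Module.finrank K (Module.Dual K W) + Module.finrank K (LinearMap.ker Φ)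
      = Module.finrank K M := by
    have h := LinearMap.finrank_range_add_finrank_ker Φ
    rwa [LinearMap.range_eq_top.mpr hΦsurj, finrank_top] at h
  have h2 : Module.finrank K (Module.Dual K W) = Module.finrank K W :=
    Subspace.dual_finrank_eq
  have h3 : Module.finrank K (LinearMap.range L) + Module.finrank K W
      = Module.finrank K M := LinearMap.finrank_range_add_finrank_ker L
  have hrank : Module.finrank K (LinearMap.ker Φ)
      = Module.finrank K (LinearMap.range L) := by
    rw [h2] at h1
    omega
  -- range L ≤ ker Φ
  have hle : LinearMap.range L ≤ LinearMap.ker Φ := by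
    rintro _ ⟨z, rfl⟩
    rw [LinearMap.mem_ker]
    ext y
    show T (f (y : M) (π ^ i • z)) = 0
    rw [hC z y (LinearMap.mem_ker.mp y.2), map_zero]
  have heq : LinearMap.range L = LinearMap.ker Φ :=
    Submodule.eq_of_le_of_finrank_le hle (le_of_eq hrank)
  constructor
  · intro hx
    have hxker : x ∈ LinearMap.ker Φ := by
      rw [LinearMap.mem_ker]
      ext y
      show T (f (y : M) x) = 0
      rw [hx y (LinearMap.mem_ker.mp y.2), map_zero]
    rw [← heq] at hxker
    obtain ⟨z, hz⟩ := hxker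
    exact ⟨z, hz.symm⟩
  · rintro ⟨z, rfl⟩
    intro y hy
    exact hC z y hy
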